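/- Let n ∈ ℕ, let I be a nonempty open interval, f : I → ℝ twice differentiable with nonvanishing first derivative, and p = (p₁,…,pₙ) : I → ℝ₊ⁿ continuously differentiable, p₀ := p₁+⋯+pₙ. Then for ℓ ≠ m in {1,…,n}, at every diagonal point (t,…,t): ∂_ℓ² A_{f,p}(t,…,t) = 2 p_ℓ'(t)(p₀(t)−p_ℓ(t))/p₀(t)² + (p_ℓ(t)(p₀(t)−p_ℓ(t))/p₀(t)²)·(f''(t)/f'(t)) and ∂_ℓ∂_m A_{f,p}(t,…,t) = −(p_ℓ p_m)'(t)/p₀(t)² − (p_ℓ(t)p_m(t)/p₀(t)²)·(f''(t)/f'(t)). -/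

import Mathlib

open Finset Filter Set
open scoped Topology

/-- The nonsymmetric generalized Bajraktarević mean. -/
noncomputable def bajMean {n : ℕ} (f : ℝ → ℝ) (I : Set ℝ) (p : Fin n → ℝ → ℝ)
    (x : Fin n → ℝ) : ℝ :=
  Function.invFunOn f I ((∑ i, p i (x i) * f (x i)) / ∑ i, p i (x i))

/-- The partial derivative of a function of `n` real variables with respect
to the `m`-th variable. -/
noncomputable def pd {n : ℕ} (m : Fin n) (F : (Fin n → ℝ) → ℝ) (x : Fin n → ℝ) : ℝ :=
  deriv (fun s => F (Function.update x m s)) (x m)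


private lemma hasDerivAt_mul_of_continuousAt {a b : ℝ → ℝ} {t b' : ℝ}
    (ha : ContinuousAt a t) (hb : HasDerivAt b b' t) (hbt : b t = 0) :
    HasDerivAt (fun s => a s * b s) (a t * b') t := by
  rw [hasDerivAt_iff_tendsto_slope] at hb ⊢
  have hsl : slope (fun s => a s * b s) t = fun s => a s * slope b t s := by
    funext s
    simp only [slope_def_field, hbt, mul_zero, sub_zero]
    ring
  rw [hsl]
  exact (Filter.Tendsto.mono_left ha nhdsWithin_le_nhds).mul hb

private lemma comb_mem {S : Set ℝ} (hS : Convex ℝ S) {x y : ℝ} (hx : x ∈ S) (hy : y ∈ S)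
    {a b : ℝ} (ha : 0 < a) (hb : 0 ≤ b) : (a * x + b * y) / (a + b) ∈ S := by
  have hab : 0 < a + b := by linarith
  have h := hS hx hy (div_nonneg ha.le hab.le) (div_nonneg hb hab.le)
    (by field_simp)
  have he : (a / (a + b)) • x + (b / (a + b)) • y = (a * x + b * y) / (a + b) := by
    rw [smul_eq_mul, smul_eq_mul, div_mul_eq_mul_div, div_mul_eq_mul_div, ← add_div]
  rwa [he] at h

private lemma invFunOn_deriv {I : Set ℝ} (hIo : IsOpen I) (hIc : I.OrdConnected)
    {f : ℝ → ℝ} (hfd : ∀ s ∈ I, DifferentiableAt ℝ f s)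
    (hfd2 : ∀ s ∈ I, DifferentiableAt ℝ (deriv f) s)
    (hf' : ∀ s ∈ I, deriv f s ≠ 0)
    {w : ℝ} (hw : w ∈ I) :
    Function.invFunOn f I (f w) = w ∧
      HasDerivAt (Function.invFunOn f I) (deriv f w)⁻¹ (f w) := by
  have hcont : ContinuousOn f I := fun s hs => (hfd s hs).continuousAt.continuousWithinAt
  have hconv : Convex ℝ I := convex_iff_ordConnected.mpr hIc
  have hd'cont : ContinuousOn (deriv f) I := fun s hs =>
    (hfd2 s hs).continuousAt.continuousWithinAt
  have hinj : Set.InjOn f I := by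
    rcases em (∀ x ∈ I, 0 < deriv f x) with hpos | hneg
    · exact (strictMonoOn_of_deriv_pos hconv hcont
        (fun x hx => hpos x (by rwa [hIo.interior_eq] at hx))).injOn
    · push_neg at hneg
      obtain ⟨b, hbI, hb⟩ := hneg
      have hbneg : deriv f b < 0 := lt_of_le_of_ne hb (hf' b hbI)
      have hallneg : ∀ x ∈ I, deriv f x < 0 := by
        intro x hx
        rcases lt_or_gt_of_ne (hf' x hx) with h | h
        · exact h
        · exfalso
          have hsub : Set.uIcc x b ⊆ I := hIc.uIcc_subset hx hbI
          have h0 : (0:ℝ) ∈ Set.uIcc (deriv f x) (deriv f b) :=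
            Set.mem_uIcc.mpr (Or.inr ⟨hbneg.le, h.le⟩)
          obtain ⟨cc, hcmem, hc0⟩ := intermediate_value_uIcc (hd'cont.mono hsub) h0
          exact hf' cc (hsub hcmem) hc0
      exact (strictAntiOn_of_deriv_neg hconv hcont
        (fun x hx => hallneg x (by rwa [hIo.interior_eq] at hx))).injOn
  have hleft : ∀ x ∈ I, Function.invFunOn f I (f x) = x := fun x hx =>
    hinj.leftInvOn_invFunOn hx
  have hstrict : HasStrictDerivAt f (deriv f w) w := by
    refine hasStrictDerivAt_of_hasDerivAt_of_continuousAt ?_ (hfd2 w hw).continuousAt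
    filter_upwards [hIo.mem_nhds hw] with y hy using (hfd y hy).hasDerivAt
  have hF := hstrict.hasStrictFDerivAt_equiv (hf' w hw)
  have hright : ∀ᶠ y in 𝓝 (f w), f (hF.localInverse f _ w y) = y := hF.eventually_right_inverse
  have hg₀w : hF.localInverse f _ w (f w) = w := hF.localInverse_apply_image
  have hg₀cont : ContinuousAt (hF.localInverse f _ w) (f w) := hF.localInverse_continuousAt
  have hmem : ∀ᶠ y in 𝓝 (f w), hF.localInverse f _ w y ∈ I :=
    hg₀cont.eventually_mem (by rw [hg₀w]; exact hIo.mem_nhds hw)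
  have hev : Function.invFunOn f I =ᶠ[𝓝 (f w)] hF.localInverse f _ w := by
    filter_upwards [hright, hmem] with y h1 h2
    calc Function.invFunOn f I y = Function.invFunOn f I (f (hF.localInverse f _ w y)) := by
          rw [h1]
      _ = hF.localInverse f _ w y := hleft _ h2
  refine ⟨hleft w hw, ?_⟩
  rw [hev.hasDerivAt_iff]
  exact (hstrict.to_localInverse (hf' w hw)).hasDerivAt

private lemma invFunOn_fact {I : Set ℝ} (hIo : IsOpen I) (hIc : I.OrdConnected)
    {f : ℝ → ℝ} (hfd : ∀ s ∈ I, DifferentiableAt ℝ f s)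
    (hfd2 : ∀ s ∈ I, DifferentiableAt ℝ (deriv f) s)
    (hf' : ∀ s ∈ I, deriv f s ≠ 0)
    {y : ℝ} (hy : y ∈ f '' I) :
    Function.invFunOn f I y ∈ I ∧ f (Function.invFunOn f I y) = y ∧
      HasDerivAt (Function.invFunOn f I) (deriv f (Function.invFunOn f I y))⁻¹ y := by
  obtain ⟨w, hw, rfl⟩ := hy
  obtain ⟨h1, h2⟩ := invFunOn_deriv hIo hIc hfd hfd2 hf' hw
  rw [h1]
  exact ⟨hw, rfl, h2⟩

private lemma imageConvex {I : Set ℝ} (hIc : I.OrdConnected)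
    {f : ℝ → ℝ} (hfd : ∀ s ∈ I, DifferentiableAt ℝ f s) : Convex ℝ (f '' I) := by
  rw [convex_iff_ordConnected]
  exact ((isPreconnected_iff_ordConnected.mpr hIc).image f
    (fun s hs => (hfd s hs).continuousAt.continuousWithinAt)).ordConnected

private lemma partA {I : Set ℝ} (hIo : IsOpen I) (hIc : I.OrdConnected)
    {f : ℝ → ℝ} (hfd : ∀ s ∈ I, DifferentiableAt ℝ f s)
    (hfd2 : ∀ s ∈ I, DifferentiableAt ℝ (deriv f) s)
    (hf' : ∀ s ∈ I, deriv f s ≠ 0)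
    {pl : ℝ → ℝ} (hpld : ∀ s ∈ I, DifferentiableAt ℝ pl s)
    (hpld' : ContinuousOn (deriv pl) I)
    (hplp : ∀ s ∈ I, 0 < pl s)
    {c : ℝ} (hc : 0 ≤ c) {t : ℝ} (ht : t ∈ I) :
    HasDerivAt (deriv (fun u => Function.invFunOn f I ((pl u * f u + c * f t) / (pl u + c))))
      (2 * deriv pl t * c / (pl t + c) ^ 2 +
        pl t * c / (pl t + c) ^ 2 * (deriv (deriv f) t / deriv f t)) t := by
  have hfI : Convex ℝ (f '' I) := imageConvex hIc hfd
  have hDne : ∀ s ∈ I, pl s + c ≠ 0 := fun s hs =>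
    (add_pos_of_pos_of_nonneg (hplp s hs) hc).ne'
  have hQmem : ∀ s ∈ I, (pl s * f s + c * f t) / (pl s + c) ∈ f '' I := fun s hs =>
    comb_mem hfI (Set.mem_image_of_mem f hs) (Set.mem_image_of_mem f ht) (hplp s hs) hc
  have hkey : ∀ s ∈ I,
      Function.invFunOn f I ((pl s * f s + c * f t) / (pl s + c)) ∈ I ∧
      f (Function.invFunOn f I ((pl s * f s + c * f t) / (pl s + c))) =
        (pl s * f s + c * f t) / (pl s + c) ∧
      HasDerivAt (Function.invFunOn f I)
        (deriv f (Function.invFunOn f I ((pl s * f s + c * f t) / (pl s + c))))⁻¹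
        ((pl s * f s + c * f t) / (pl s + c)) := fun s hs =>
    invFunOn_fact hIo hIc hfd hfd2 hf' (hQmem s hs)
  have hQd : ∀ s ∈ I, HasDerivAt (fun u => (pl u * f u + c * f t) / (pl u + c))
      (((deriv pl s * f s + pl s * deriv f s) * (pl s + c) -
        (pl s * f s + c * f t) * deriv pl s) / (pl s + c) ^ 2) s := fun s hs =>
    HasDerivAt.div (((hpld s hs).hasDerivAt.mul (hfd s hs).hasDerivAt).add_const _)
      ((hpld s hs).hasDerivAt.add_const _) (hDne s hs)
  have hφd : ∀ s ∈ I, HasDerivAt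
      (fun u => Function.invFunOn f I ((pl u * f u + c * f t) / (pl u + c)))
      ((deriv f (Function.invFunOn f I ((pl s * f s + c * f t) / (pl s + c))))⁻¹ *
        (((deriv pl s * f s + pl s * deriv f s) * (pl s + c) -
          (pl s * f s + c * f t) * deriv pl s) / (pl s + c) ^ 2)) s := fun s hs =>
    (((hkey s hs).2.2).comp s (hQd s hs) :)
  have hΦeq : ∀ s ∈ I,
      deriv (fun u => Function.invFunOn f I ((pl u * f u + c * f t) / (pl u + c))) s =
      deriv pl s * ((f s - (pl s * f s + c * f t) / (pl s + c)) /
          ((pl s + c) * deriv f (Function.invFunOn f I ((pl s * f s + c * f t) / (pl s + c))))) +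
        pl s * deriv f s /
          ((pl s + c) * deriv f (Function.invFunOn f I ((pl s * f s + c * f t) / (pl s + c)))) := by
    intro s hs
    rw [(hφd s hs).deriv]
    have h2 : deriv f (Function.invFunOn f I ((pl s * f s + c * f t) / (pl s + c))) ≠ 0 :=
      hf' _ (hkey s hs).1
    have h1 : pl s + c ≠ 0 := hDne s hs
    set G := deriv f (Function.invFunOn f I ((pl s * f s + c * f t) / (pl s + c))) with hG
    field_simp
    ring
  have hev : deriv (fun u => Function.invFunOn f I ((pl u * f u + c * f t) / (pl u + c))) =ᶠ[nhds t]
      fun s => deriv pl s * ((f s - (pl s * f s + c * f t) / (pl s + c)) /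
          ((pl s + c) * deriv f (Function.invFunOn f I ((pl s * f s + c * f t) / (pl s + c))))) +
        pl s * deriv f s /
          ((pl s + c) * deriv f (Function.invFunOn f I ((pl s * f s + c * f t) / (pl s + c)))) := by
    filter_upwards [hIo.mem_nhds ht] with s hs using hΦeq s hs
  rw [hev.hasDerivAt_iff]
  -- values at t
  have hQt : (pl t * f t + c * f t) / (pl t + c) = f t := by
    rw [div_eq_iff (hDne t ht)]
    ring
  have hgt : Function.invFunOn f I ((pl t * f t + c * f t) / (pl t + c)) = t := by
    rw [hQt]
    exact (invFunOn_deriv hIo hIc hfd hfd2 hf' ht).1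
  have hf2 : HasDerivAt (deriv f) (deriv (deriv f) t)
      (Function.invFunOn f I ((pl t * f t + c * f t) / (pl t + c))) := by
    rw [hgt]; exact (hfd2 t ht).hasDerivAt
  have hfφ : HasDerivAt
      (fun s => deriv f (Function.invFunOn f I ((pl s * f s + c * f t) / (pl s + c))))
      (deriv (deriv f) t *
        ((deriv f (Function.invFunOn f I ((pl t * f t + c * f t) / (pl t + c))))⁻¹ *
          (((deriv pl t * f t + pl t * deriv f t) * (pl t + c) -
            (pl t * f t + c * f t) * deriv pl t) / (pl t + c) ^ 2))) t :=
    (hf2.comp t (hφd t ht) :)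
  have hden : HasDerivAt
      (fun s => (pl s + c) * deriv f (Function.invFunOn f I ((pl s * f s + c * f t) / (pl s + c))))
      (deriv pl t * deriv f (Function.invFunOn f I ((pl t * f t + c * f t) / (pl t + c))) +
        (pl t + c) * (deriv (deriv f) t *
          ((deriv f (Function.invFunOn f I ((pl t * f t + c * f t) / (pl t + c))))⁻¹ *
            (((deriv pl t * f t + pl t * deriv f t) * (pl t + c) -
              (pl t * f t + c * f t) * deriv pl t) / (pl t + c) ^ 2)))) t :=
    ((hpld t ht).hasDerivAt.add_const c).mul hfφ
  have hdenne : (pl t + c) *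
      deriv f (Function.invFunOn f I ((pl t * f t + c * f t) / (pl t + c))) ≠ 0 :=
    mul_ne_zero (hDne t ht) (by rw [hgt]; exact hf' t ht)
  have hB := ((hfd t ht).hasDerivAt.sub (hQd t ht)).div hden hdenne
  have hC := ((hpld t ht).hasDerivAt.mul (hfd2 t ht).hasDerivAt).div hden hdenne
  have hBt0 : (f t - (pl t * f t + c * f t) / (pl t + c)) /
      ((pl t + c) * deriv f (Function.invFunOn f I ((pl t * f t + c * f t) / (pl t + c)))) = 0 := by
    rw [hQt, sub_self, zero_div]
  have hmain := (hasDerivAt_mul_of_continuousAt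
    (hpld'.continuousAt (hIo.mem_nhds ht)) hB hBt0).add hC
  refine hmain.congr_deriv ?_
  simp only [Pi.sub_apply, Pi.mul_apply]
  rw [hgt, hQt]
  have h1 : pl t + c ≠ 0 := hDne t ht
  have h2 : deriv f t ≠ 0 := hf' t ht
  field_simp
  ring

private lemma partB {I : Set ℝ} (hIo : IsOpen I) (hIc : I.OrdConnected)
    {f : ℝ → ℝ} (hfd : ∀ s ∈ I, DifferentiableAt ℝ f s)
    (hfd2 : ∀ s ∈ I, DifferentiableAt ℝ (deriv f) s)
    (hf' : ∀ s ∈ I, deriv f s ≠ 0)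
    {pl pm : ℝ → ℝ} (hpld : ∀ s ∈ I, DifferentiableAt ℝ pl s)
    (hplp : ∀ s ∈ I, 0 < pl s)
    {c₂ : ℝ} (hc2 : 0 ≤ c₂) {t : ℝ} (ht : t ∈ I)
    (hpmd : DifferentiableAt ℝ pm t) (hpmt : 0 ≤ pm t) :
    HasDerivAt (fun s => deriv (fun u => Function.invFunOn f I
        ((pl s * f s + pm u * f u + c₂ * f t) / (pl s + pm u + c₂))) t)
      (-(deriv pl t * pm t + pl t * deriv pm t) / (pl t + (pm t + c₂)) ^ 2 -
        pl t * pm t / (pl t + (pm t + c₂)) ^ 2 * (deriv (deriv f) t / deriv f t)) t := by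
  set c : ℝ := pm t + c₂ with hcdef
  have hc : 0 ≤ c := add_nonneg hpmt hc2
  have hfI : Convex ℝ (f '' I) := imageConvex hIc hfd
  have hDne : ∀ s ∈ I, pl s + c ≠ 0 := fun s hs =>
    (add_pos_of_pos_of_nonneg (hplp s hs) hc).ne'
  have hQmem : ∀ s ∈ I, (pl s * f s + c * f t) / (pl s + c) ∈ f '' I := fun s hs =>
    comb_mem hfI (Set.mem_image_of_mem f hs) (Set.mem_image_of_mem f ht) (hplp s hs) hc
  have hkey : ∀ s ∈ I,
      Function.invFunOn f I ((pl s * f s + c * f t) / (pl s + c)) ∈ I ∧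
      f (Function.invFunOn f I ((pl s * f s + c * f t) / (pl s + c))) =
        (pl s * f s + c * f t) / (pl s + c) ∧
      HasDerivAt (Function.invFunOn f I)
        (deriv f (Function.invFunOn f I ((pl s * f s + c * f t) / (pl s + c))))⁻¹
        ((pl s * f s + c * f t) / (pl s + c)) := fun s hs =>
    invFunOn_fact hIo hIc hfd hfd2 hf' (hQmem s hs)
  -- Step 1: pointwise formula for the inner derivative
  have hstep1 : ∀ s ∈ I,
      deriv (fun u => Function.invFunOn f I
          ((pl s * f s + pm u * f u + c₂ * f t) / (pl s + pm u + c₂))) t =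
      (deriv pm t * (f t - (pl s * f s + c * f t) / (pl s + c)) + pm t * deriv f t) /
        ((pl s + c) * deriv f (Function.invFunOn f I ((pl s * f s + c * f t) / (pl s + c)))) := by
    intro s hs
    have hne : pl s + pm t + c₂ ≠ 0 := by
      have := hDne s hs
      rw [hcdef] at this
      intro h; exact this (by linarith)
    have hRst : (pl s * f s + pm t * f t + c₂ * f t) / (pl s + pm t + c₂) =
        (pl s * f s + c * f t) / (pl s + c) := by
      rw [hcdef]; ring_nf
    have hRd : HasDerivAt (fun u => (pl s * f s + pm u * f u + c₂ * f t) / (pl s + pm u + c₂))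
        (((0 + (deriv pm t * f t + pm t * deriv f t)) * (pl s + pm t + c₂) -
          (pl s * f s + pm t * f t + c₂ * f t) * (0 + deriv pm t)) / (pl s + pm t + c₂) ^ 2) t :=
      HasDerivAt.div
        (((hasDerivAt_const t (pl s * f s)).add
          (hpmd.hasDerivAt.mul (hfd t ht).hasDerivAt)).add_const (c₂ * f t))
        (((hasDerivAt_const t (pl s)).add hpmd.hasDerivAt).add_const c₂) hne
    have hgd : HasDerivAt (Function.invFunOn f I)
        (deriv f (Function.invFunOn f I ((pl s * f s + c * f t) / (pl s + c))))⁻¹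
        ((pl s * f s + pm t * f t + c₂ * f t) / (pl s + pm t + c₂)) := by
      rw [hRst]; exact (hkey s hs).2.2
    have hcomp : HasDerivAt (fun u => Function.invFunOn f I
        ((pl s * f s + pm u * f u + c₂ * f t) / (pl s + pm u + c₂)))
        ((deriv f (Function.invFunOn f I ((pl s * f s + c * f t) / (pl s + c))))⁻¹ *
          (((0 + (deriv pm t * f t + pm t * deriv f t)) * (pl s + pm t + c₂) -
            (pl s * f s + pm t * f t + c₂ * f t) * (0 + deriv pm t)) / (pl s + pm t + c₂) ^ 2))
        t := (hgd.comp t hRd :)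
    rw [hcomp.deriv]
    have h2 : deriv f (Function.invFunOn f I ((pl s * f s + c * f t) / (pl s + c))) ≠ 0 :=
      hf' _ (hkey s hs).1
    have h1 : pl s + c ≠ 0 := hDne s hs
    set G := deriv f (Function.invFunOn f I ((pl s * f s + c * f t) / (pl s + c))) with hG
    rw [hcdef]
    rw [hcdef] at h1
    field_simp
    ring
  -- Step 2: replace the function by the nice formula near t
  have hev : (fun s => deriv (fun u => Function.invFunOn f I
        ((pl s * f s + pm u * f u + c₂ * f t) / (pl s + pm u + c₂))) t) =ᶠ[nhds t]
      fun s => (deriv pm t * (f t - (pl s * f s + c * f t) / (pl s + c)) + pm t * deriv f t) /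
        ((pl s + c) * deriv f (Function.invFunOn f I ((pl s * f s + c * f t) / (pl s + c)))) := by
    filter_upwards [hIo.mem_nhds ht] with s hs using hstep1 s hs
  rw [hev.hasDerivAt_iff]
  -- Step 3: differentiate the nice formula at t
  have hQd : ∀ s ∈ I, HasDerivAt (fun u => (pl u * f u + c * f t) / (pl u + c))
      (((deriv pl s * f s + pl s * deriv f s) * (pl s + c) -
        (pl s * f s + c * f t) * deriv pl s) / (pl s + c) ^ 2) s := fun s hs =>
    HasDerivAt.div (((hpld s hs).hasDerivAt.mul (hfd s hs).hasDerivAt).add_const _)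
      ((hpld s hs).hasDerivAt.add_const _) (hDne s hs)
  have hφd : ∀ s ∈ I, HasDerivAt
      (fun u => Function.invFunOn f I ((pl u * f u + c * f t) / (pl u + c)))
      ((deriv f (Function.invFunOn f I ((pl s * f s + c * f t) / (pl s + c))))⁻¹ *
        (((deriv pl s * f s + pl s * deriv f s) * (pl s + c) -
          (pl s * f s + c * f t) * deriv pl s) / (pl s + c) ^ 2)) s := fun s hs =>
    (((hkey s hs).2.2).comp s (hQd s hs) :)
  have hQt : (pl t * f t + c * f t) / (pl t + c) = f t := by
    rw [div_eq_iff (hDne t ht)]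
    ring
  have hgt : Function.invFunOn f I ((pl t * f t + c * f t) / (pl t + c)) = t := by
    rw [hQt]
    exact (invFunOn_deriv hIo hIc hfd hfd2 hf' ht).1
  have hf2 : HasDerivAt (deriv f) (deriv (deriv f) t)
      (Function.invFunOn f I ((pl t * f t + c * f t) / (pl t + c))) := by
    rw [hgt]; exact (hfd2 t ht).hasDerivAt
  have hfφ : HasDerivAt
      (fun s => deriv f (Function.invFunOn f I ((pl s * f s + c * f t) / (pl s + c))))
      (deriv (deriv f) t *
        ((deriv f (Function.invFunOn f I ((pl t * f t + c * f t) / (pl t + c))))⁻¹ *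
          (((deriv pl t * f t + pl t * deriv f t) * (pl t + c) -
            (pl t * f t + c * f t) * deriv pl t) / (pl t + c) ^ 2))) t :=
    (hf2.comp t (hφd t ht) :)
  have hden : HasDerivAt
      (fun s => (pl s + c) * deriv f (Function.invFunOn f I ((pl s * f s + c * f t) / (pl s + c))))
      (deriv pl t * deriv f (Function.invFunOn f I ((pl t * f t + c * f t) / (pl t + c))) +
        (pl t + c) * (deriv (deriv f) t *
          ((deriv f (Function.invFunOn f I ((pl t * f t + c * f t) / (pl t + c))))⁻¹ *
            (((deriv pl t * f t + pl t * deriv f t) * (pl t + c) -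
              (pl t * f t + c * f t) * deriv pl t) / (pl t + c) ^ 2)))) t :=
    ((hpld t ht).hasDerivAt.add_const c).mul hfφ
  have hdenne : (pl t + c) *
      deriv f (Function.invFunOn f I ((pl t * f t + c * f t) / (pl t + c))) ≠ 0 :=
    mul_ne_zero (hDne t ht) (by rw [hgt]; exact hf' t ht)
  have hnum : HasDerivAt
      (fun s => deriv pm t * (f t - (pl s * f s + c * f t) / (pl s + c)) + pm t * deriv f t)
      (deriv pm t * (0 - (((deriv pl t * f t + pl t * deriv f t) * (pl t + c) -
        (pl t * f t + c * f t) * deriv pl t) / (pl t + c) ^ 2))) t :=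
    (((hasDerivAt_const t (f t)).sub (hQd t ht)).const_mul (deriv pm t)).add_const (pm t * deriv f t)
  have hmain := hnum.div hden hdenne
  refine hmain.congr_deriv ?_
  rw [hgt, hQt]
  have h1 : pl t + c ≠ 0 := hDne t ht
  have h2 : deriv f t ≠ 0 := hf' t ht
  field_simp
  ring

/-- Second-order partial derivatives of the Bajraktarević mean at
diagonal points: for `ℓ ≠ m`,
`∂_ℓ² A_{f,p}(t,…,t) = 2p_ℓ'(p₀−p_ℓ)/p₀² + (p_ℓ(p₀−p_ℓ)/p₀²)·f''/f'` and
`∂_ℓ∂_m A_{f,p}(t,…,t) = −(p_ℓ p_m)'/p₀² − (p_ℓ p_m/p₀²)·f''/f'`. -/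
theorem bajMean_second_partial_derivs_on_diagonal
    (n : ℕ) (I : Set ℝ) (hIo : IsOpen I) (hIc : I.OrdConnected) (hIne : I.Nonempty)
    (f : ℝ → ℝ) (hfd : ∀ s ∈ I, DifferentiableAt ℝ f s)
    (hfd2 : ∀ s ∈ I, DifferentiableAt ℝ (deriv f) s)
    (hf' : ∀ s ∈ I, deriv f s ≠ 0)
    (p : Fin n → ℝ → ℝ)
    (hpd : ∀ i, ∀ s ∈ I, DifferentiableAt ℝ (p i) s)
    (hpd' : ∀ i, ContinuousOn (deriv (p i)) I)
    (hpp : ∀ i, ∀ s ∈ I, 0 < p i s)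
    (ℓ m : Fin n) (hℓm : ℓ ≠ m) (t : ℝ) (ht : t ∈ I) :
    HasDerivAt (fun s => pd ℓ (bajMean f I p) (Function.update (fun _ => t) ℓ s))
      (2 * deriv (p ℓ) t * ((∑ i, p i t) - p ℓ t) / (∑ i, p i t) ^ 2 +
        p ℓ t * ((∑ i, p i t) - p ℓ t) / (∑ i, p i t) ^ 2 *
          (deriv (deriv f) t / deriv f t)) t ∧
    HasDerivAt (fun s => pd m (bajMean f I p) (Function.update (fun _ => t) ℓ s))
      (-(deriv (fun u => p ℓ u * p m u) t) / (∑ i, p i t) ^ 2 -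
        p ℓ t * p m t / (∑ i, p i t) ^ 2 * (deriv (deriv f) t / deriv f t)) t := by
  classical
  have hmne : m ≠ ℓ := Ne.symm hℓm
  have hmem : m ∈ univ.erase ℓ := mem_erase.mpr ⟨hmne, mem_univ m⟩
  set c : ℝ := ∑ i ∈ univ.erase ℓ, p i t with hcdef
  set c₂ : ℝ := ∑ i ∈ (univ.erase ℓ).erase m, p i t with hc2def
  have hceq : p ℓ t + c = ∑ i, p i t := Finset.add_sum_erase univ (fun i => p i t) (mem_univ ℓ)
  have hc2eq : p m t + c₂ = c := Finset.add_sum_erase _ (fun i => p i t) hmem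
  have hc0 : 0 ≤ c := Finset.sum_nonneg fun i _ => (hpp i t ht).le
  have hc20 : 0 ≤ c₂ := Finset.sum_nonneg fun i _ => (hpp i t ht).le
  have hbaj1 : ∀ u, bajMean f I p (Function.update (fun _ => t) ℓ u) =
      Function.invFunOn f I ((p ℓ u * f u + c * f t) / (p ℓ u + c)) := by
    intro u
    have hyt : ∀ i ∈ univ.erase ℓ, Function.update (fun _ => t) ℓ u i = t := fun i hi =>
      Function.update_of_ne (mem_erase.mp hi).1 _ _
    have h1 : ∑ i, p i (Function.update (fun _ => t) ℓ u i) *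
        f (Function.update (fun _ => t) ℓ u i) = p ℓ u * f u + c * f t := by
      have hsum : ∑ i ∈ univ.erase ℓ,
          p i (Function.update (fun _ => t) ℓ u i) * f (Function.update (fun _ => t) ℓ u i)
          = c * f t := by
        rw [hcdef, Finset.sum_mul]
        exact Finset.sum_congr rfl fun i hi => by rw [hyt i hi]
      rw [← Finset.add_sum_erase univ
        (fun i => p i (Function.update (fun _ => t) ℓ u i) * f (Function.update (fun _ => t) ℓ u i))
        (mem_univ ℓ), hsum]
      simp [Function.update_self]
    have h2 : ∑ i, p i (Function.update (fun _ => t) ℓ u i) = p ℓ u + c := by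
      have hsum : ∑ i ∈ univ.erase ℓ, p i (Function.update (fun _ => t) ℓ u i) = c := by
        rw [hcdef]
        exact Finset.sum_congr rfl fun i hi => by rw [hyt i hi]
      rw [← Finset.add_sum_erase univ
        (fun i => p i (Function.update (fun _ => t) ℓ u i)) (mem_univ ℓ), hsum]
      simp [Function.update_self]
    unfold bajMean
    rw [h1, h2]
  have hfun1 : (fun s => pd ℓ (bajMean f I p) (Function.update (fun _ => t) ℓ s)) =
      deriv (fun u => Function.invFunOn f I ((p ℓ u * f u + c * f t) / (p ℓ u + c))) := by
    funext s
    show deriv (fun s' => bajMean f I p (Function.update (Function.update (fun _ => t) ℓ s) ℓ s'))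
        (Function.update (fun _ => t) ℓ s ℓ) = _
    rw [Function.update_self]
    congr 1
    funext u
    rw [Function.update_idem]
    exact hbaj1 u
  have hbaj2 : ∀ s u, bajMean f I p (Function.update (Function.update (fun _ => t) ℓ s) m u) =
      Function.invFunOn f I ((p ℓ s * f s + p m u * f u + c₂ * f t) / (p ℓ s + p m u + c₂)) := by
    intro s u
    set y := Function.update (Function.update (fun _ => t) ℓ s) m u with hy
    have hyl : y ℓ = s := by rw [hy, Function.update_of_ne hℓm, Function.update_self]
    have hym : y m = u := by rw [hy, Function.update_self]
    have hyt : ∀ i ∈ (univ.erase ℓ).erase m, y i = t := by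
      intro i hi
      obtain ⟨him, hil⟩ := mem_erase.mp hi
      have hil' := (mem_erase.mp hil).1
      rw [hy, Function.update_of_ne him, Function.update_of_ne hil']
    have h1 : ∑ i, p i (y i) * f (y i) = p ℓ s * f s + p m u * f u + c₂ * f t := by
      have hsum : ∑ i ∈ (univ.erase ℓ).erase m, p i (y i) * f (y i) = c₂ * f t := by
        rw [hc2def, Finset.sum_mul]
        exact Finset.sum_congr rfl fun i hi => by rw [hyt i hi]
      rw [← Finset.add_sum_erase univ (fun i => p i (y i) * f (y i)) (mem_univ ℓ),
        ← Finset.add_sum_erase (univ.erase ℓ) (fun i => p i (y i) * f (y i)) hmem, hsum]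
      simp only [hyl, hym]
      ring
    have h2 : ∑ i, p i (y i) = p ℓ s + p m u + c₂ := by
      have hsum : ∑ i ∈ (univ.erase ℓ).erase m, p i (y i) = c₂ := by
        rw [hc2def]
        exact Finset.sum_congr rfl fun i hi => by rw [hyt i hi]
      rw [← Finset.add_sum_erase univ (fun i => p i (y i)) (mem_univ ℓ),
        ← Finset.add_sum_erase (univ.erase ℓ) (fun i => p i (y i)) hmem, hsum]
      simp only [hyl, hym]
      ring
    unfold bajMean
    rw [h1, h2]
  have hfun2 : (fun s => pd m (bajMean f I p) (Function.update (fun _ => t) ℓ s)) =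
      (fun s => deriv (fun u => Function.invFunOn f I
        ((p ℓ s * f s + p m u * f u + c₂ * f t) / (p ℓ s + p m u + c₂))) t) := by
    funext s
    show deriv (fun u => bajMean f I p (Function.update (Function.update (fun _ => t) ℓ s) m u))
        (Function.update (fun _ => t) ℓ s m) = _
    simp only [Function.update_of_ne hmne]
    congr 1
    funext u
    exact hbaj2 s u
  constructor
  · rw [hfun1]
    have hA := partA hIo hIc hfd hfd2 hf' (hpd ℓ) (hpd' ℓ) (hpp ℓ) hc0 ht
    convert hA using 1
    rw [← hceq]
    ring
  · rw [hfun2]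
    have hB := partB hIo hIc hfd hfd2 hf' (hpd ℓ) (hpp ℓ) hc20 ht (hpd m t ht) (hpp m t ht).le
    have hprod : deriv (fun u => p ℓ u * p m u) t =
        deriv (p ℓ) t * p m t + p ℓ t * deriv (p m) t :=
      ((hpd ℓ t ht).hasDerivAt.mul (hpd m t ht).hasDerivAt).deriv
    convert hB using 1
    rw [hprod, ← hceq, ← hc2eq]
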